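/- Let S = {x_1,...,x_n} be a gcd-closed set, e a positive integer, and suppose x_m divides x_k (i.e. gcd(x_k,x_m) = x_m) with x_m having at least one greatest-type divisor in S. Then Σ_{x_r | x_m} c_{rm} · lcm(x_k, x_r)^e = 0, where c_{rm} = Σ_{d·x_r | x_m, d·x_r ∤ x_t for all x_t ∈ S with x_t < x_m} μ(d). -/

import Mathlib

open Finset

/-- `(ξ_e * μ)(d)`: Dirichlet convolution of `n ↦ n^e` with the Möbius function. -/
def xiMu (e d : ℕ) : ℤ :=
  ∑ a ∈ d.divisors, (a : ℤ) ^ e * ArithmeticFunction.moebius (d / a)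

/-- `α_{e,S}(x) = Σ_{d ∣ x, d ∤ y for all y ∈ S with y < x} (ξ_e * μ)(d)`. -/
def alphaES (e : ℕ) (S : Finset ℕ) (x : ℕ) : ℤ :=
  ∑ d ∈ x.divisors.filter (fun d => ∀ y ∈ S, y < x → ¬ d ∣ y), xiMu e d

/-- The set of greatest-type divisors of `x` in `S`. -/
def GS (S : Finset ℕ) (x : ℕ) : Finset ℕ :=
  S.filter (fun y => y ∣ x ∧ y < x ∧ ∀ z ∈ S, y ∣ z → z ∣ x → z = y ∨ z = x)

/-- An element `x` satisfies condition 𝒞 relative to `S`. -/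
def condCElem (S : Finset ℕ) (x : ℕ) : Prop :=
  ∀ y ∈ GS S x, ∀ z ∈ GS S x, y ≠ z → Nat.lcm y z = x ∧ Nat.gcd y z ∈ GS S y ∩ GS S z

/-- A set satisfies condition 𝒞 if every element with at least two
greatest-type divisors satisfies condition 𝒞. -/
def condCSet (S : Finset ℕ) : Prop :=
  ∀ x ∈ S, 2 ≤ (GS S x).card → condCElem S x

/-- `A_S(a,b) = {u ∈ S : a ∣ u ∣ b, u ≠ a}`. -/
def AS (S : Finset ℕ) (a b : ℕ) : Finset ℕ :=
  S.filter (fun u => a ∣ u ∧ u ∣ b ∧ u ≠ a)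

/-- `c_{rm}` (with `xr, xm` the actual elements): sum of `μ(d)` over `d` with
`d·xr ∣ xm` and `d·xr ∤ t` for all `t ∈ S` with `t < xm`. -/
def cCoef (S : Finset ℕ) (xr xm : ℕ) : ℤ :=
  ∑ d ∈ xm.divisors.filter (fun d => d * xr ∣ xm ∧ ∀ t ∈ S, t < xm → ¬ d * xr ∣ t),
    ArithmeticFunction.moebius d

/-- `g(k,m)` (with `xk, xm` the actual elements). -/
noncomputable def gFun (e : ℕ) (S : Finset ℕ) (xk xm : ℕ) : ℚ :=
  (1 / (alphaES e S xm : ℚ)) *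
    ∑ r ∈ S.filter (fun r => r ∣ xm), (cCoef S r xm : ℚ) * (Nat.lcm xk r : ℚ) ^ e


lemma sum_moebius_divisors (n : ℕ) :
    (∑ d ∈ n.divisors, (ArithmeticFunction.moebius d : ℤ)) = if n = 1 then 1 else 0 := by
  have h := ArithmeticFunction.coe_mul_zeta_apply
    (f := (ArithmeticFunction.moebius : ArithmeticFunction ℤ)) (x := n)
  rw [ArithmeticFunction.moebius_mul_coe_zeta, ArithmeticFunction.one_apply] at h
  exact h.symm

lemma mult_reindex (r t : ℕ) (hrt : r ∣ t) (ht : t ≠ 0) (f : ℕ → ℤ) :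
    ∑ D ∈ t.divisors.filter (fun D => r ∣ D), f (D / r) = ∑ d ∈ (t / r).divisors, f d := by
  have hr0 : 0 < r := Nat.pos_of_ne_zero (by rintro rfl; exact ht (Nat.eq_zero_of_zero_dvd hrt))
  refine Finset.sum_nbij' (i := fun D => D / r) (j := fun d => r * d) ?_ ?_ ?_ ?_ ?_
  · intro D hD
    simp only [Finset.mem_filter, Nat.mem_divisors] at hD ⊢
    obtain ⟨⟨hDt, _⟩, hrD⟩ := hD
    constructor
    · rw [Nat.dvd_div_iff_mul_dvd hrt, Nat.mul_div_cancel' hrD]; exact hDt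
    · intro h0
      rw [Nat.div_eq_zero_iff] at h0
      exact absurd (Nat.le_of_dvd (Nat.pos_of_ne_zero ht) hrt) (by omega)
  · intro d hd
    simp only [Finset.mem_filter, Nat.mem_divisors] at hd ⊢
    exact ⟨⟨(Nat.dvd_div_iff_mul_dvd hrt).mp hd.1, ht⟩, Dvd.intro d rfl⟩
  · intro D hD
    simp only [Finset.mem_filter] at hD
    exact Nat.mul_div_cancel' hD.2
  · intro d _
    exact Nat.mul_div_cancel_left d hr0
  · intro D _
    rfl

/-- `h(D) = Σ_{r ∈ S, r ∣ D} μ(D/r)`. -/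
def hDfun (S : Finset ℕ) (D : ℕ) : ℤ :=
  ∑ r ∈ S.filter (fun r => r ∣ D), (ArithmeticFunction.moebius (D / r) : ℤ)

lemma sum_hD (S : Finset ℕ) (hpos : ∀ a ∈ S, 0 < a) (t : ℕ) (ht : t ∈ S) :
    ∑ D ∈ t.divisors, hDfun S D = 1 := by
  have ht0 : t ≠ 0 := (hpos t ht).ne'
  unfold hDfun
  calc ∑ D ∈ t.divisors, ∑ r ∈ S.filter (fun r => r ∣ D), (ArithmeticFunction.moebius (D / r) : ℤ)
      = ∑ D ∈ t.divisors, ∑ r ∈ S,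
          if r ∣ D then (ArithmeticFunction.moebius (D / r) : ℤ) else 0 :=
        Finset.sum_congr rfl fun D _ => Finset.sum_filter _ _
    _ = ∑ r ∈ S, ∑ D ∈ t.divisors,
          if r ∣ D then (ArithmeticFunction.moebius (D / r) : ℤ) else 0 := Finset.sum_comm
    _ = ∑ r ∈ S, (if r = t then 1 else 0) := by
        refine Finset.sum_congr rfl fun r hr => ?_
        rw [← Finset.sum_filter]
        by_cases hrt : r ∣ t
        · rw [mult_reindex r t hrt ht0, sum_moebius_divisors]
          have hr0 : 0 < r := hpos r hr
          congr 1
          rw [eq_iff_iff]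
          constructor
          · intro h1
            have := Nat.mul_div_cancel' hrt
            rw [h1, Nat.mul_one] at this
            exact this
          · rintro rfl
            exact Nat.div_self hr0
        · rw [Finset.filter_false_of_mem, Finset.sum_empty]
          · rw [if_neg]; rintro rfl; exact hrt dvd_rfl
          · intro D hD
            rw [Nat.mem_divisors] at hD
            exact fun hrD => hrt (hrD.trans hD.1)
    _ = 1 := by rw [Finset.sum_ite_eq' S t (fun _ => (1:ℤ)), if_pos ht]

lemma cCoef_eq (S : Finset ℕ) (r xm : ℕ) (hr : 0 < r) :
    cCoef S r xm = ∑ D ∈ xm.divisors.filter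
      (fun D => r ∣ D ∧ ∀ t ∈ S, t < xm → ¬ D ∣ t),
      (ArithmeticFunction.moebius (D / r) : ℤ) := by
  unfold cCoef
  refine Finset.sum_nbij' (i := fun d => d * r) (j := fun D => D / r) ?_ ?_ ?_ ?_ ?_
  · intro d hd
    simp only [Finset.mem_filter, Nat.mem_divisors] at hd ⊢
    exact ⟨⟨hd.2.1, hd.1.2⟩, Dvd.intro_left d rfl, hd.2.2⟩
  · intro D hD
    simp only [Finset.mem_filter, Nat.mem_divisors] at hD ⊢
    obtain ⟨⟨hDxm, hxm0⟩, hrD, hbad⟩ := hD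
    rw [Nat.div_mul_cancel hrD]
    exact ⟨⟨(Nat.div_dvd_of_dvd hrD).trans hDxm, hxm0⟩, hDxm, hbad⟩
  · intro d _
    exact Nat.mul_div_cancel d hr
  · intro D hD
    simp only [Finset.mem_filter] at hD
    exact Nat.div_mul_cancel hD.2.1
  · intro d _
    rw [Nat.mul_div_cancel d hr]


lemma exists_gtd (S : Finset ℕ) (hpos : ∀ a ∈ S, 0 < a) (xm : ℕ) (hm : xm ∈ S)
    (s : ℕ) (hs : s ∈ S) (hsdvd : s ∣ xm) (hslt : s < xm) :
    ∃ g ∈ GS S xm, s ∣ g := by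
  classical
  set M := S.filter (fun z => s ∣ z ∧ z ∣ xm ∧ z ≠ xm) with hM
  have hsM : s ∈ M := by
    simp only [hM, Finset.mem_filter]
    exact ⟨hs, dvd_rfl, hsdvd, by omega⟩
  have hMne : M.Nonempty := ⟨s, hsM⟩
  set g := M.max' hMne with hg
  have hgM : g ∈ M := M.max'_mem hMne
  simp only [hM, Finset.mem_filter] at hgM
  obtain ⟨hgS, hsg, hgxm, hgne⟩ := hgM
  have hxm0 : 0 < xm := hpos xm hm
  have hglt : g < xm := lt_of_le_of_ne (Nat.le_of_dvd hxm0 hgxm) hgne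
  refine ⟨g, ?_, hsg⟩
  rw [GS, Finset.mem_filter]
  refine ⟨hgS, hgxm, hglt, ?_⟩
  intro z hz hgz hzxm
  by_cases hzx : z = xm
  · right; exact hzx
  · left
    have hzM : z ∈ M := by
      simp only [hM, Finset.mem_filter]
      exact ⟨hz, hsg.trans hgz, hzxm, hzx⟩
    have h1 : z ≤ g := M.le_max' z hzM
    have h2 : g ≤ z := Nat.le_of_dvd (hpos z hz) hgz
    omega

lemma bad_iff (S : Finset ℕ) (hpos : ∀ a ∈ S, 0 < a)
    (hgcd : ∀ a ∈ S, ∀ b ∈ S, Nat.gcd a b ∈ S) (xm : ℕ) (hm : xm ∈ S)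
    (D : ℕ) (hD : D ∣ xm) :
    (∀ t ∈ S, t < xm → ¬ D ∣ t) ↔ ∀ g ∈ GS S xm, ¬ D ∣ g := by
  constructor
  · intro h g hg
    rw [GS, Finset.mem_filter] at hg
    exact h g hg.1 hg.2.2.1
  · intro h t ht htlt hDt
    set s := Nat.gcd t xm with hsdef
    have hsS : s ∈ S := hgcd t ht xm hm
    have hsd : s ∣ xm := Nat.gcd_dvd_right t xm
    have hslt : s < xm :=
      lt_of_le_of_lt (Nat.le_of_dvd (hpos t ht) (Nat.gcd_dvd_left t xm)) htlt
    obtain ⟨g, hg, hsg⟩ := exists_gtd S hpos xm hm s hsS hsd hslt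
    exact h g hg ((Nat.dvd_gcd hDt hD).trans hsg)

lemma exists_gcd_elem (S : Finset ℕ) (hpos : ∀ a ∈ S, 0 < a)
    (hgcd : ∀ a ∈ S, ∀ b ∈ S, Nat.gcd a b ∈ S)
    (xm : ℕ) (hm : xm ∈ S) (J : Finset ℕ) (hJ : J ⊆ GS S xm) :
    ∃ t ∈ S, t ∣ xm ∧ ∀ D : ℕ, (D ∣ t ↔ D ∣ xm ∧ ∀ g ∈ J, D ∣ g) := by
  classical
  revert hJ
  induction J using Finset.induction_on with
  | empty => exact fun _ => ⟨xm, hm, dvd_rfl, fun D => by simp⟩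
  | @insert a J' ha ih =>
    intro hJ
    obtain ⟨t', ht'S, ht'd, hiff⟩ := ih (fun x hx => hJ (Finset.mem_insert_of_mem hx))
    have haGS : a ∈ GS S xm := hJ (Finset.mem_insert_self a J')
    rw [GS, Finset.mem_filter] at haGS
    refine ⟨Nat.gcd a t', hgcd a haGS.1 t' ht'S, (Nat.gcd_dvd_right a t').trans ht'd, fun D => ?_⟩
    have h1 : D ∣ Nat.gcd a t' ↔ D ∣ a ∧ D ∣ t' :=
      ⟨fun h => ⟨h.trans (Nat.gcd_dvd_left _ _), h.trans (Nat.gcd_dvd_right _ _)⟩,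
       fun h => Nat.dvd_gcd h.1 h.2⟩
    rw [h1, hiff D]
    simp only [Finset.forall_mem_insert]
    tauto

lemma sum_bad_zero (S : Finset ℕ) (hpos : ∀ a ∈ S, 0 < a)
    (hgcd : ∀ a ∈ S, ∀ b ∈ S, Nat.gcd a b ∈ S)
    (xm : ℕ) (hm : xm ∈ S) (hG : (GS S xm).Nonempty) :
    ∑ D ∈ xm.divisors.filter (fun D => ∀ t ∈ S, t < xm → ¬ D ∣ t), hDfun S D = 0 := by
  classical
  have hxm0 : xm ≠ 0 := (hpos xm hm).ne'
  have htot : ∑ D ∈ xm.divisors, hDfun S D = 1 := sum_hD S hpos xm hm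
  have hsplit := Finset.sum_filter_add_sum_filter_not xm.divisors
    (fun D => ∀ t ∈ S, t < xm → ¬ D ∣ t) (hDfun S)
  have hpw : ∀ D : ℕ, (GS S xm).powerset.filter (fun J => ∀ g ∈ J, D ∣ g)
      = ((GS S xm).filter (fun g => D ∣ g)).powerset := by
    intro D
    ext J
    simp only [Finset.mem_filter, Finset.mem_powerset, Finset.subset_iff, Finset.mem_filter]
    constructor
    · rintro ⟨h1, h2⟩ x hx
      exact ⟨h1 hx, h2 x hx⟩
    · intro h
      refine ⟨fun {x} hx => (h hx).1, fun x hx => (h hx).2⟩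
  have hnotbad : ∑ D ∈ xm.divisors.filter (fun D => ¬ ∀ t ∈ S, t < xm → ¬ D ∣ t),
      hDfun S D = 1 := by
    have hfc : xm.divisors.filter (fun D => ¬ ∀ t ∈ S, t < xm → ¬ D ∣ t)
        = xm.divisors.filter (fun D => ∃ g ∈ GS S xm, D ∣ g) := by
      refine Finset.filter_congr fun D hD => ?_
      rw [Nat.mem_divisors] at hD
      rw [bad_iff S hpos hgcd xm hm D hD.1]
      push_neg
      simp
    rw [hfc]
    have hnotgood : ∑ D ∈ xm.divisors.filter (fun D => ¬ ∃ g ∈ GS S xm, D ∣ g),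
        hDfun S D = 0 := by
      calc ∑ D ∈ xm.divisors.filter (fun D => ¬ ∃ g ∈ GS S xm, D ∣ g), hDfun S D
          = ∑ D ∈ xm.divisors,
              (if ¬ ∃ g ∈ GS S xm, D ∣ g then hDfun S D else 0) := Finset.sum_filter _ _
        _ = ∑ D ∈ xm.divisors, ∑ J ∈ (GS S xm).powerset,
              (if ∀ g ∈ J, D ∣ g then (-1:ℤ)^J.card else 0) * hDfun S D := by
            refine Finset.sum_congr rfl fun D _ => ?_
            rw [← Finset.sum_mul, ← Finset.sum_filter, hpw D,
              Finset.sum_powerset_neg_one_pow_card]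
            have hiff2 : (((GS S xm).filter (fun g => D ∣ g)) = ∅) ↔
                ¬ ∃ g ∈ GS S xm, D ∣ g := by
              rw [Finset.filter_eq_empty_iff]
              constructor
              · rintro h ⟨g, hg, hd⟩
                exact h hg hd
              · intro h x hx hd
                exact h ⟨x, hx, hd⟩
            simp only [hiff2]
            split_ifs <;> simp
        _ = ∑ J ∈ (GS S xm).powerset, ∑ D ∈ xm.divisors,
              (if ∀ g ∈ J, D ∣ g then (-1:ℤ)^J.card else 0) * hDfun S D := Finset.sum_comm
        _ = ∑ J ∈ (GS S xm).powerset, (-1:ℤ)^J.card := by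
            refine Finset.sum_congr rfl fun J hJ => ?_
            rw [Finset.mem_powerset] at hJ
            obtain ⟨t, htS, htd, hiff⟩ := exists_gcd_elem S hpos hgcd xm hm J hJ
            have hfe : xm.divisors.filter (fun D => ∀ g ∈ J, D ∣ g) = t.divisors := by
              ext D
              simp only [Finset.mem_filter, Nat.mem_divisors]
              constructor
              · rintro ⟨⟨hDxm, _⟩, hall⟩
                exact ⟨(hiff D).mpr ⟨hDxm, hall⟩, (hpos t htS).ne'⟩
              · rintro ⟨hDt, _⟩
                obtain ⟨h1, h2⟩ := (hiff D).mp hDt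
                exact ⟨⟨h1, hxm0⟩, h2⟩
            calc ∑ D ∈ xm.divisors,
                  (if ∀ g ∈ J, D ∣ g then (-1:ℤ)^J.card else 0) * hDfun S D
                = ∑ D ∈ xm.divisors,
                  (if ∀ g ∈ J, D ∣ g then (-1:ℤ)^J.card * hDfun S D else 0) := by
                  refine Finset.sum_congr rfl fun D _ => ?_
                  split_ifs <;> simp
              _ = ∑ D ∈ xm.divisors.filter (fun D => ∀ g ∈ J, D ∣ g),
                  (-1:ℤ)^J.card * hDfun S D := (Finset.sum_filter _ _).symm
              _ = (-1:ℤ)^J.card * ∑ D ∈ t.divisors, hDfun S D := by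
                  rw [hfe, Finset.mul_sum]
              _ = (-1:ℤ)^J.card := by rw [sum_hD S hpos t htS, mul_one]
        _ = 0 := Finset.sum_powerset_neg_one_pow_card_of_nonempty hG
    have hsplit2 := Finset.sum_filter_add_sum_filter_not xm.divisors
      (fun D => ∃ g ∈ GS S xm, D ∣ g) (hDfun S)
    have hcompl : xm.divisors.filter (fun D => ∃ g ∈ GS S xm, D ∣ g)
        = xm.divisors.filter (fun D => ¬ ¬ ∃ g ∈ GS S xm, D ∣ g) := by
      refine Finset.filter_congr fun D _ => ?_
      rw [not_not]
    rw [htot] at hsplit2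
    rw [hnotgood] at hsplit2
    linarith [hsplit2]
  rw [hnotbad, htot] at hsplit
  linarith [hsplit]

lemma sum_cCoef_zero (S : Finset ℕ) (hpos : ∀ a ∈ S, 0 < a)
    (hgcd : ∀ a ∈ S, ∀ b ∈ S, Nat.gcd a b ∈ S)
    (xm : ℕ) (hm : xm ∈ S) (hG : (GS S xm).Nonempty) :
    ∑ r ∈ S.filter (fun r => r ∣ xm), cCoef S r xm = 0 := by
  classical
  have hxm0 : xm ≠ 0 := (hpos xm hm).ne'
  calc ∑ r ∈ S.filter (fun r => r ∣ xm), cCoef S r xm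
      = ∑ r ∈ S.filter (fun r => r ∣ xm), ∑ D ∈ xm.divisors.filter
          (fun D => r ∣ D ∧ ∀ t ∈ S, t < xm → ¬ D ∣ t),
          (ArithmeticFunction.moebius (D / r) : ℤ) := by
        refine Finset.sum_congr rfl fun r hr => ?_
        exact cCoef_eq S r xm (hpos r (Finset.mem_filter.mp hr).1)
    _ = ∑ D ∈ xm.divisors.filter (fun D => ∀ t ∈ S, t < xm → ¬ D ∣ t),
          ∑ r ∈ S.filter (fun r => r ∣ D), (ArithmeticFunction.moebius (D / r) : ℤ) := by
        refine Finset.sum_comm' ?_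
        intro r D
        constructor
        · rintro ⟨hr, hD⟩
          rw [Finset.mem_filter] at hr hD
          obtain ⟨hrS, hrxm⟩ := hr
          obtain ⟨hDdiv, hrD, hbad⟩ := hD
          exact ⟨Finset.mem_filter.mpr ⟨hrS, hrD⟩, Finset.mem_filter.mpr ⟨hDdiv, hbad⟩⟩
        · rintro ⟨hr, hD⟩
          rw [Finset.mem_filter] at hr hD
          obtain ⟨hrS, hrD⟩ := hr
          obtain ⟨hDdiv, hbad⟩ := hD
          have hDxm : D ∣ xm := (Nat.mem_divisors.mp hDdiv).1
          exact ⟨Finset.mem_filter.mpr ⟨hrS, hrD.trans hDxm⟩,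
            Finset.mem_filter.mpr ⟨hDdiv, hrD, hbad⟩⟩
    _ = ∑ D ∈ xm.divisors.filter (fun D => ∀ t ∈ S, t < xm → ¬ D ∣ t), hDfun S D := rfl
    _ = 0 := sum_bad_zero S hpos hgcd xm hm hG

theorem sum_cCoef_lcm_eq_zero (e : ℕ) (he : 0 < e) (S : Finset ℕ)
    (hpos : ∀ a ∈ S, 0 < a) (hgcd : ∀ a ∈ S, ∀ b ∈ S, Nat.gcd a b ∈ S)
    (xk xm : ℕ) (hk : xk ∈ S) (hm : xm ∈ S)
    (hdvd : xm ∣ xk) (hG : (GS S xm).Nonempty) :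
    (∑ r ∈ S.filter (fun r => r ∣ xm),
        cCoef S r xm * ((Nat.lcm xk r : ℕ) : ℤ) ^ e) = 0 := by
  classical
  have hstep : ∀ r ∈ S.filter (fun r => r ∣ xm),
      cCoef S r xm * ((Nat.lcm xk r : ℕ) : ℤ) ^ e = cCoef S r xm * (xk : ℤ) ^ e := by
    intro r hr
    rw [Finset.mem_filter] at hr
    have hl : Nat.lcm xk r = xk :=
      Nat.dvd_antisymm (Nat.lcm_dvd dvd_rfl (hr.2.trans hdvd)) (Nat.dvd_lcm_left _ _)
    rw [hl]
  rw [Finset.sum_congr rfl hstep, ← Finset.sum_mul,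
    sum_cCoef_zero S hpos hgcd xm hm hG, zero_mul]
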